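/- arXiv:2207.08763 — 4 statements merged into one kernel-verified Lean document; each statement's English description precedes it below -/
import Mathlib

section
/- With the coefficients 𝒜 = (C-A)(b-a) - (c-a)(B-A) and ℬ = -(B+c)(C-A)(b-a) + (b+C)(c-a)(B-A): if 𝒜 = 0 and all ladder edge lengths are nonzero, then ℬ = 0 if and only if B - b = C - c. -/
noncomputable def ladderA (A B C a b c : ℝ) : ℝ := (C - A) * (b - a) - (c - a) * (B - A)
noncomputable def ladderB (A B C a b c : ℝ) : ℝ := -(B + c) * (C - A) * (b - a) + (b + C) * (c - a) * (B - A)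
noncomputable def ladderC (A B C a b c : ℝ) : ℝ := c * B * (C - A) * (b - a) - C * b * (c - a) * (B - A)
noncomputable def ladderD (A B C a b c : ℝ) : ℝ := (ladderB A B C a b c) ^ 2 - 4 * ladderA A B C a b c * ladderC A B C a b c

theorem stmt_2 (A B C a b c : ℝ)
    (hBA : B - A ≠ 0) (hCA : C - A ≠ 0) (hCB : C - B ≠ 0)
    (hba : b - a ≠ 0) (hca : c - a ≠ 0) (hcb : c - b ≠ 0)
    (haA : a - A ≠ 0) (hbB : b - B ≠ 0) (hcC : c - C ≠ 0)
    (hA : ladderA A B C a b c = 0) :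
    ladderB A B C a b c = 0 ↔ B - b = C - c := by
  unfold ladderA ladderB at *
  have hk : (c - a) * (B - A) = (C - A) * (b - a) := by linarith
  have hk0 : (C - A) * (b - a) ≠ 0 := mul_ne_zero hCA hba
  have hrw : -(B + c) * (C - A) * (b - a) + (b + C) * (c - a) * (B - A)
      = (C - A) * (b - a) * ((b + C) - (B + c)) := by linear_combination (b + C) * hk
  rw [hrw]
  constructor
  · intro h
    have := (mul_eq_zero.mp h).resolve_left hk0
    linarith
  · intro h
    have : (b + C) - (B + c) = 0 := by linarith
    rw [this, mul_zero]
end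

section
/- Fix real numbers A,B,C,a,b and regard the discriminant D(A,B,C,a,b,t) = ℬ(t)² - 4𝒜(t)𝒞(t) as a polynomial in t. If this polynomial has degree exactly 2 in t, and all ladder edge lengths with the variable last coordinate are nonzero (in particular B-A, C-A, C-B, b-a, a-A, b-B are nonzero), then its discriminant (as a quadratic in t) is nonzero; hence the set {t : D(A,B,C,a,b,t) = 0} cannot be a single point with D ≤ 0 nearby on both sides. -/
theorem stmt_4 (A B C a b : ℝ)
    (hBA : B - A ≠ 0) (hCA : C - A ≠ 0) (hCB : C - B ≠ 0)
    (hba : b - a ≠ 0) (haA : a - A ≠ 0) (hbB : b - B ≠ 0)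
    (p q r : ℝ) (hp : p ≠ 0)
    (hquad : ∀ t : ℝ, ladderD A B C a b t = p * t ^ 2 + q * t + r) :
    q ^ 2 - 4 * p * r ≠ 0 := by
  have h0 := hquad 0
  have h1 := hquad 1
  have h2 := hquad (-1)
  simp only [ladderD, ladderA, ladderB, ladderC] at h0 h1 h2
  have hr : r = ladderD A B C a b 0 := by
    simp only [ladderD, ladderA, ladderB, ladderC]; linear_combination -h0
  have key : q ^ 2 - 4 * p * r =
      16 * (B - A) * (C - A) ^ 2 * (C - B) ^ 2 * (b - a) ^ 3 * (a - A) * (b - B) := by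
    have hqe : q = (ladderD A B C a b 1 - ladderD A B C a b (-1)) / 2 := by
      simp only [ladderD, ladderA, ladderB, ladderC]; linear_combination (-h1 + h2) / 2
    have hpe : p = (ladderD A B C a b 1 + ladderD A B C a b (-1)) / 2
        - ladderD A B C a b 0 := by
      simp only [ladderD, ladderA, ladderB, ladderC]; linear_combination h0 - (h1 + h2) / 2
    rw [hqe, hpe, hr]
    simp only [ladderD, ladderA, ladderB, ladderC]
    ring
  rw [key]
  exact mul_ne_zero (mul_ne_zero (mul_ne_zero (mul_ne_zero (mul_ne_zero
    (mul_ne_zero (by norm_num) hBA) (pow_ne_zero _ hCA)) (pow_ne_zero _ hCB))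
    (pow_ne_zero _ hba)) haA) hbB
end

section
/- After the projective normalization A = -1, B = 0, C = 1, the discriminant-of-the-discriminant satisfies DD(a,b) = -64·b·(a+1)·(a-b)³, where DD is the discriminant (in c) of the quadratic polynomial c ↦ D(-1,0,1,a,b,c). Consequently DD(a,b) = 0 only if b = 0, or a = -1, or a = b. -/
theorem stmt_5 (a b : ℝ) (p q r : ℝ)
    (hquad : ∀ c : ℝ, ladderD (-1) 0 1 a b c = p * c ^ 2 + q * c + r) :
    q ^ 2 - 4 * p * r = -64 * b * (a + 1) * (a - b) ^ 3 ∧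
    (q ^ 2 - 4 * p * r = 0 → b = 0 ∨ a = -1 ∨ a = b) := by
  have h0 := hquad 0
  have h1 := hquad 1
  have h2 := hquad (-1)
  simp only [ladderD, ladderA, ladderB, ladderC] at h0 h1 h2
  have key : q ^ 2 - 4 * p * r = -64 * b * (a + 1) * (a - b) ^ 3 := by
    have hr : r = ladderD (-1) 0 1 a b 0 := by
      simp only [ladderD, ladderA, ladderB, ladderC]; linarith
    have hq : q = (ladderD (-1) 0 1 a b 1 - ladderD (-1) 0 1 a b (-1)) / 2 := by
      simp only [ladderD, ladderA, ladderB, ladderC]; linarith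
    have hp : p = (ladderD (-1) 0 1 a b 1 + ladderD (-1) 0 1 a b (-1) - 2 * ladderD (-1) 0 1 a b 0) / 2 := by
      simp only [ladderD, ladderA, ladderB, ladderC]; linarith
    rw [hp, hq, hr]
    simp only [ladderD, ladderA, ladderB, ladderC]
    ring
  refine ⟨key, fun h => ?_⟩
  rw [key] at h
  have : b = 0 ∨ (a + 1) = 0 ∨ (a - b) ^ 3 = 0 := by
    rcases mul_eq_zero.1 (by linarith : (-64 * b * (a + 1)) * (a - b) ^ 3 = 0) with h' | h'
    · rcases mul_eq_zero.1 h' with h'' | h''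
      · rcases mul_eq_zero.1 h'' with h3 | h3
        · norm_num at h3
        · exact Or.inl h3
      · exact Or.inr (Or.inl h'')
    · exact Or.inr (Or.inr h')
  rcases this with h | h | h
  · exact Or.inl h
  · exact Or.inr (Or.inl (by linarith))
  · exact Or.inr (Or.inr (by have := pow_eq_zero_iff (n := 3) (by norm_num) |>.1 h; linarith))
end

section
/- Let A,B,C,a,b,c be real numbers forming a stretched cycle A < B, B > b, b > a, a > A (i.e. A < a < b < B), with all ladder edge lengths nonzero. Then the discriminant D(A,B,C,a,b,c) > 0 for all real C, c making edge lengths nonzero. -/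
set_option maxHeartbeats 1000000

/-- If a quadratic takes values of opposite sign at two points, its discriminant is positive. -/
lemma quad_disc_pos (P Q R x y : ℝ)
    (h : (P * x ^ 2 + Q * x + R) * (P * y ^ 2 + Q * y + R) < 0) :
    Q ^ 2 - 4 * P * R > 0 := by
  rcases eq_or_ne P 0 with hP | hP
  · subst hP
    have hQ : Q ≠ 0 := by
      intro hQ; subst hQ; nlinarith [sq_nonneg R]
    have : Q ^ 2 > 0 := by positivity
    linarith
  · have hkey : P * (P * x ^ 2 + Q * x + R) < 0 ∨ P * (P * y ^ 2 + Q * y + R) < 0 := by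
      rcases lt_or_gt_of_ne hP with h' | h' <;>
        rcases mul_neg_iff.mp h with ⟨h1, h2⟩ | ⟨h1, h2⟩
      · left; exact mul_neg_of_neg_of_pos h' h1
      · right; exact mul_neg_of_neg_of_pos h' h2
      · right; exact mul_neg_of_pos_of_neg h' h2
      · left; exact mul_neg_of_pos_of_neg h' h1
    rcases hkey with h' | h'
    · nlinarith [sq_nonneg (2 * P * x + Q)]
    · nlinarith [sq_nonneg (2 * P * y + Q)]

theorem stmt_6 (A B C a b c : ℝ)
    (h1 : A < a) (h2 : a < b) (h3 : b < B)
    (hBA : B - A ≠ 0) (hCA : C - A ≠ 0) (hCB : C - B ≠ 0)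
    (hba : b - a ≠ 0) (hca : c - a ≠ 0) (hcb : c - b ≠ 0)
    (haA : a - A ≠ 0) (hbB : b - B ≠ 0) (hcC : c - C ≠ 0) :
    ladderD A B C a b c > 0 := by
  have hprod : (ladderA A B C a b c * A ^ 2 + ladderB A B C a b c * A + ladderC A B C a b c) *
      (ladderA A B C a b c * b ^ 2 + ladderB A B C a b c * b + ladderC A B C a b c)
      = -((B - A) * (a - A) * (b - a) * (B - b)) * ((c - b) * (C - A)) ^ 2 := by
    unfold ladderA ladderB ladderC; ring
  have hpos : 0 < (B - A) * (a - A) * (b - a) * (B - b) := by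
    have hx1 : (0:ℝ) < B - A := by linarith
    have hx2 : (0:ℝ) < a - A := by linarith
    have hx3 : (0:ℝ) < b - a := by linarith
    have hx4 : (0:ℝ) < B - b := by linarith
    positivity
  have hsq : 0 < ((c - b) * (C - A)) ^ 2 := by
    have : (c - b) * (C - A) ≠ 0 := mul_ne_zero hcb hCA
    positivity
  have hneg : (ladderA A B C a b c * A ^ 2 + ladderB A B C a b c * A + ladderC A B C a b c) *
      (ladderA A B C a b c * b ^ 2 + ladderB A B C a b c * b + ladderC A B C a b c) < 0 := by
    rw [hprod]
    have := mul_pos hpos hsq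
    linarith
  have := quad_disc_pos (ladderA A B C a b c) (ladderB A B C a b c) (ladderC A B C a b c) A b hneg
  unfold ladderD
  linarith
end
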